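/- If c = (m, m·G_k, m) is a codeword of L_k^+ and the weight of m is 2i, then the weight of c is 6i; if the weight of m is 2i+1, then the weight of c is k + 2i + 1. -/

import Mathlib

/-- the k×k matrix over F₂ with 0 on the diagonal and 1 elsewhere -/
def G (k : ℕ) : Matrix (Fin k) (Fin k) (ZMod 2) := fun i j => if i = j then 0 else 1

lemma zmod2_cases (a : ZMod 2) : a = 0 ∨ a = 1 := by fin_cases a; exacts [Or.inl rfl, Or.inr rfl]

lemma vecMul_G (k : ℕ) (m : Fin k → ZMod 2) (j : Fin k) :
    Matrix.vecMul m (G k) j = (∑ x, m x) + m j := by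
  simp only [Matrix.vecMul, dotProduct, G]
  have h1 : ∀ x : Fin k, m x * (if x = j then 0 else 1) =
      (if x = j then 0 else m x) := by intro x; split <;> ring
  simp only [h1]
  have h2 : ∑ x, m x = (∑ x, (if x = j then m x else 0)) +
      ∑ x, (if x = j then 0 else m x) := by
    rw [← Finset.sum_add_distrib]
    congr 1; funext x; split <;> ring
  rw [Finset.sum_ite_eq' Finset.univ j m, if_pos (Finset.mem_univ j)] at h2
  have h3 : m j + m j = 0 := by
    rcases zmod2_cases (m j) with h | h <;> rw [h] <;> decide
  linear_combination -h2 - h3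

lemma sum_eq_norm (k : ℕ) (m : Fin k → ZMod 2) :
    ∑ x, m x = (hammingNorm m : ZMod 2) := by
  rw [hammingNorm, ← Finset.sum_filter_ne_zero]
  rw [Finset.sum_congr rfl (fun x hx => ?_), Finset.sum_const, nsmul_eq_mul, mul_one]
  rcases zmod2_cases (m x) with h | h
  · simp [Finset.mem_filter, h] at hx
  · exact h

lemma norm_le (k : ℕ) (m : Fin k → ZMod 2) : hammingNorm m ≤ k := by
  simpa [hammingNorm] using (Finset.card_filter_le Finset.univ _ : hammingNorm m ≤ _)

lemma norm_compl (k : ℕ) (m : Fin k → ZMod 2) :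
    hammingNorm (fun j => 1 + m j) = k - hammingNorm m := by
  have h : (Finset.univ.filter fun j : Fin k => (1 : ZMod 2) + m j ≠ 0)
      = (Finset.univ.filter fun j => m j ≠ 0)ᶜ := by
    ext j
    simp only [Finset.mem_filter, Finset.mem_compl, Finset.mem_univ, true_and]
    rcases zmod2_cases (m j) with h | h <;> rw [h] <;> decide
  rw [hammingNorm, hammingNorm]
  show (Finset.univ.filter fun j : Fin k => (1 : ZMod 2) + m j ≠ 0).card = _
  rw [h, Finset.card_compl, Fintype.card_fin]

theorem stmt14 (k : ℕ) (m : Fin k → ZMod 2) :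
    (∀ i : ℕ, hammingNorm m = 2 * i →
      hammingNorm m + hammingNorm (Matrix.vecMul m (G k)) + hammingNorm m = 6 * i) ∧
    (∀ i : ℕ, hammingNorm m = 2 * i + 1 →
      hammingNorm m + hammingNorm (Matrix.vecMul m (G k)) + hammingNorm m
        = k + 2 * i + 1) := by
  have h2z : ((2 : ℕ) : ZMod 2) = 0 := by decide
  constructor
  · intro i hi
    have heq : Matrix.vecMul m (G k) = m := by
      funext j
      rw [vecMul_G, sum_eq_norm, hi, Nat.cast_mul, h2z, zero_mul, zero_add]
    rw [heq, hi]; ring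
  · intro i hi
    have heq : Matrix.vecMul m (G k) = fun j => 1 + m j := by
      funext j
      rw [vecMul_G, sum_eq_norm, hi, Nat.cast_add, Nat.cast_mul, Nat.cast_one,
        h2z, zero_mul, zero_add]
    rw [heq, norm_compl, hi]
    have := norm_le k m
    omega
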